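/- Let n, m ≥ 1, let A ∈ GL_n(L) and B ∈ GL_m(L) be monomial matrices (each row and each column contains exactly one nonzero entry), and let C = (c_{ij}) ∈ M_{n×m}(L). Let g ∈ GL_{n+m}(L) be the block matrix [[A, C], [0, B]]. For 1 ≤ i ≤ n let α_i = v(unique nonzero entry of row i of A), for 1 ≤ j ≤ m let β_j = v(unique nonzero entry of column j of B), and let γ_1 ≤ γ_2 ≤ ⋯ ≤ γ_{n+m} be the nondecreasing rearrangement of the multiset {α_1,…,α_n, β_1,…,β_m}. Then g ∈ GL_{n+m}(𝒪_L) · diag(t^{γ_1},…,t^{γ_{n+m}}) · GL_{n+m}(𝒪_L) if and only if for every (i,j), either c_{ij} = 0 or v(c_{ij}) ≥ min{α_i, β_j}. -/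

import Mathlib

open Matrix



section ValAux

variable {L : Type*} [Field L] {v : L → ℤ}
variable (hv_mul : ∀ x y : L, x ≠ 0 → y ≠ 0 → v (x * y) = v x + v y)

include hv_mul

theorem aux_v_one : v 1 = 0 := by
  have := hv_mul 1 1 one_ne_zero one_ne_zero
  simp at this; omega

theorem aux_v_neg (x : L) (hx : x ≠ 0) : v (-x) = v x := by
  have h1 : v ((-1 : L) * (-1)) = v (-1) + v (-1) :=
    hv_mul _ _ (by norm_num) (by norm_num)
  simp at h1
  rw [aux_v_one hv_mul] at h1
  have h2 : v (-x) = v (-1) + v x := by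
    rw [← hv_mul (-1) x (by norm_num) hx]; ring_nf
  omega

theorem aux_v_inv (x : L) (hx : x ≠ 0) : v x⁻¹ = - v x := by
  have := hv_mul x x⁻¹ hx (inv_ne_zero hx)
  rw [mul_inv_cancel₀ hx, aux_v_one hv_mul] at this
  omega

theorem aux_v_zpow {t : L} (ht0 : t ≠ 0) (ht1 : v t = 1) (z : ℤ) : v (t ^ z) = z := by
  have hnat : ∀ k : ℕ, v (t ^ k) = k := by
    intro k
    induction k with
    | zero => simpa using aux_v_one hv_mul
    | succ k ih =>
      rw [pow_succ, hv_mul _ _ (pow_ne_zero _ ht0) ht0, ih, ht1]; push_cast; ring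
  obtain ⟨k, rfl | rfl⟩ := z.eq_nat_or_neg
  · rw [zpow_natCast, hnat]
  · rw [_root_.zpow_neg, aux_v_inv hv_mul _ (zpow_ne_zero _ ht0), zpow_natCast, hnat]

theorem aux_v_prod {ι : Type*} (s : Finset ι) (f : ι → L) (hf : ∀ i ∈ s, f i ≠ 0) :
    v (∏ i ∈ s, f i) = ∑ i ∈ s, v (f i) := by
  classical
  induction s using Finset.induction_on with
  | empty => simpa using aux_v_one hv_mul
  | @insert x s' hx ih =>
    rw [Finset.prod_insert hx, Finset.sum_insert hx,
      hv_mul _ _ (hf x (by simp)) (Finset.prod_ne_zero_iff.2 fun i hi => hf i (by simp [hi])),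
      ih (fun i hi => hf i (by simp [hi]))]

end ValAux

section ValAdd

variable {L : Type*} [Field L] {v : L → ℤ}
variable (hv_add : ∀ x y : L, x ≠ 0 → y ≠ 0 → x + y ≠ 0 → min (v x) (v y) ≤ v (x + y))

include hv_add

theorem aux_v_sum_bound {ι : Type*} (s : Finset ι) (f : ι → L) (c : ℤ)
    (hf : ∀ i ∈ s, f i = 0 ∨ c ≤ v (f i)) :
    (∑ i ∈ s, f i) = 0 ∨ c ≤ v (∑ i ∈ s, f i) := by
  classical
  induction s using Finset.induction_on with
  | empty => simp
  | @insert x s' hx ih =>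
    rw [Finset.sum_insert hx]
    have hrest := ih (fun i hi => hf i (by simp [hi]))
    have hx0 := hf x (by simp)
    rcases hx0 with h0 | hcx
    · rw [h0, zero_add]; exact hrest
    rcases hrest with h0 | hcr
    · rw [h0, add_zero]; right; exact hcx
    by_cases hs : f x + ∑ i ∈ s', f i = 0
    · left; exact hs
    · right
      by_cases hfx : f x = 0
      · rw [hfx, zero_add] at hs ⊢; exact hcr
      by_cases hsr : (∑ i ∈ s', f i) = 0
      · rw [hsr, add_zero] at hs ⊢; exact hcx
      calc c ≤ min (v (f x)) (v (∑ i ∈ s', f i)) := le_min hcx hcr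
        _ ≤ _ := hv_add _ _ hfx hsr hs

end ValAdd

theorem aux_det_mem {L : Type*} [Field L] (O : Subring L) {ι : Type*} [DecidableEq ι] [Fintype ι]
    (M : Matrix ι ι L) (h : ∀ i j, M i j ∈ O) : M.det ∈ O := by
  rw [Matrix.det_apply]
  refine Subring.sum_mem _ fun σ _ => ?_
  rw [Units.smul_def]
  exact zsmul_mem (Subring.prod_mem _ fun i _ => h _ _) _

theorem aux_lift {L : Type*} [Field L] (O : Subring L) {ι : Type*} [DecidableEq ι] [Fintype ι]
    (M : Matrix ι ι L) (h : ∀ i j, M i j ∈ O) (hd0 : M.det ≠ 0) (hdinv : M.det⁻¹ ∈ O) :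
    ∃ U : Matrix ι ι O, IsUnit U.det ∧ U.map (fun x => (x : L)) = M := by
  refine ⟨Matrix.of fun i j => (⟨M i j, h i j⟩ : O), ?_, by ext i j; simp⟩
  have hmapeq : (Matrix.of fun i j => (⟨M i j, h i j⟩ : O)).map (fun x => (x : L)) = M := by
    ext i j; simp
  have hdetgen : ∀ W : Matrix ι ι O, (W.map (fun x => (x : L))).det = (W.det : L) := by
    intro W
    simpa [RingHom.mapMatrix_apply] using (RingHom.map_det O.subtype W).symm
  have hdet : ((Matrix.of fun i j => (⟨M i j, h i j⟩ : O)).det : L) = M.det := by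
    rw [← hdetgen, hmapeq]
  rw [isUnit_iff_exists_inv]
  refine ⟨⟨M.det⁻¹, hdinv⟩, ?_⟩
  ext
  push_cast [hdet]
  exact mul_inv_cancel₀ hd0

theorem aux_filter_eq_map {N k : ℕ} (h : k ≤ N) :
    Finset.filter (fun l : Fin N => (l : ℕ) < k) Finset.univ =
      Finset.map (Fin.castLEEmb h) Finset.univ := by
  ext p
  simp only [Finset.mem_filter, Finset.mem_univ, true_and, Finset.mem_map]
  constructor
  · intro hp
    exact ⟨⟨p, hp⟩, rfl⟩
  · rintro ⟨q, -, rfl⟩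
    simpa using q.2

theorem aux_card_filter {N k : ℕ} (h : k ≤ N) :
    (Finset.filter (fun l : Fin N => (l : ℕ) < k) Finset.univ).card = k := by
  rw [aux_filter_eq_map h, Finset.card_map, Finset.card_univ, Fintype.card_fin]

theorem aux_sum_smallest {N : ℕ} (γ : Fin N → ℤ) (hmono : Monotone γ) (S : Finset (Fin N)) :
    ∑ l ∈ Finset.filter (fun l : Fin N => (l : ℕ) < S.card) Finset.univ, γ l ≤ ∑ l ∈ S, γ l := by
  have hkN : S.card ≤ N := by
    simpa using S.card_le_univ
  set k := S.card with hk
  let emb := S.orderEmbOfFin hk.symm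
  have hle : ∀ r : ℕ, ∀ h : r < k, r ≤ ((emb ⟨r, h⟩ : Fin N) : ℕ) := by
    intro r
    induction r with
    | zero => intro h; exact Nat.zero_le _
    | succ rp ih =>
      intro h
      have h1 : rp < k := Nat.lt_of_succ_lt h
      have h2 := emb.strictMono (show (⟨rp, h1⟩ : Fin k) < ⟨rp + 1, h⟩ by
        simp [Fin.lt_def])
      have := ih h1
      have h2' : ((emb ⟨rp, h1⟩ : Fin N) : ℕ) < ((emb ⟨rp+1, h⟩ : Fin N) : ℕ) := h2
      omega
  have himg : Finset.image (fun q => emb q) Finset.univ = S := by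
    ext p
    simp only [Finset.mem_image, Finset.mem_univ, true_and]
    constructor
    · rintro ⟨q, rfl⟩; exact Finset.orderEmbOfFin_mem _ _ _
    · intro hp
      have : p ∈ Set.range emb := by rw [Finset.range_orderEmbOfFin]; exact hp
      obtain ⟨q, hq⟩ := this
      exact ⟨q, hq⟩
  calc ∑ l ∈ Finset.filter (fun l : Fin N => (l : ℕ) < k) Finset.univ, γ l
      = ∑ q : Fin k, γ (Fin.castLE hkN q) := by
        rw [aux_filter_eq_map hkN, Finset.sum_map]; rfl
    _ ≤ ∑ q : Fin k, γ (emb q) := by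
        refine Finset.sum_le_sum fun q _ => hmono ?_
        rw [Fin.le_def]
        exact hle q q.2
    _ = ∑ l ∈ S, γ l := by
        rw [← himg, Finset.sum_image (fun x _ y _ h => emb.injective h)]

-- assume available: aux_v_one etc (will concatenate); for scratch, restate as axioms? no, just import via copy later.
-- Here develop with sorried references:

theorem aux_key {L : Type*} [Field L] {v : L → ℤ}
    (hv_mul : ∀ x y : L, x ≠ 0 → y ≠ 0 → v (x * y) = v x + v y)
    (hv_add : ∀ x y : L, x ≠ 0 → y ≠ 0 → x + y ≠ 0 → min (v x) (v y) ≤ v (x + y))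
    {t : L} (ht0 : t ≠ 0) (ht1 : v t = 1)
    (O : Subring L) (hO : ∀ x : L, x ∈ O ↔ x = 0 ∨ 0 ≤ v x)
    {N : ℕ} (γ : Fin N → ℤ) (hmono : Monotone γ)
    {ι : Type*} [Fintype ι] [DecidableEq ι]
    (U V : Matrix (Fin N) (Fin N) L)
    (hU : ∀ p q, U p q ∈ O) (hV : ∀ p q, V p q ∈ O)
    (r c : ι → Fin N) :
    ((U * (Matrix.diagonal fun p => t ^ (γ p)) * V).submatrix r c).det = 0 ∨
      (∑ l ∈ Finset.filter (fun l : Fin N => (l : ℕ) < Fintype.card ι) Finset.univ, γ l)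
        ≤ v ((U * (Matrix.diagonal fun p => t ^ (γ p)) * V).submatrix r c).det := by
  classical
  set D := (Matrix.diagonal fun p => t ^ (γ p)) with hD
  set X := U.submatrix r (id : Fin N → Fin N) with hX
  set W := (D * V).submatrix (id : Fin N → Fin N) c with hW
  have hsplit : (U * D * V).submatrix r c = X * W := by
    rw [mul_assoc, Matrix.submatrix_mul U (D * V) r id c Function.bijective_id]
  rw [hsplit]
  have hrows : X * W = Matrix.of fun p => ∑ l, X p l • W l := by
    ext p q
    simp [Matrix.mul_apply, Finset.sum_apply]
  have hdet : (X * W).det =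
      ∑ rr : ι → Fin N, (∏ p, X p (rr p)) • (Matrix.detRowAlternating fun p => W (rr p)) := by
    rw [hrows]
    show Matrix.detRowAlternating _ = _
    rw [show (Matrix.of fun p => ∑ l, X p l • W l : Matrix ι ι L) = fun p => ∑ l, X p l • W l
      from rfl]
    have hms := (Matrix.detRowAlternating :
      (ι → L) [⋀^ι]→ₗ[L] L).toMultilinearMap.map_sum (g := fun p l => X p l • W l)
    simp only [AlternatingMap.coe_multilinearMap] at hms
    rw [hms]
    refine Finset.sum_congr rfl fun rr _ => ?_
    have hsm := (Matrix.detRowAlternating :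
      (ι → L) [⋀^ι]→ₗ[L] L).toMultilinearMap.map_smul_univ
      (fun p => X p (rr p)) (fun p => W (rr p))
    simp only [AlternatingMap.coe_multilinearMap] at hsm
    exact hsm
  rw [hdet]
  set bound := ∑ l ∈ Finset.filter (fun l : Fin N => (l : ℕ) < Fintype.card ι) Finset.univ, γ l
    with hbound
  refine aux_v_sum_bound hv_add _ _ _ fun rr _ => ?_
  by_cases hinj : Function.Injective rr
  · -- term analysis
    have hWrr : (fun p => W (rr p)) = fun p => ((Matrix.diagonal fun p => t ^ (γ (rr p))) *
        (V.submatrix rr c) : Matrix ι ι L) p := by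
      funext p; funext q
      simp [hW, hD, Matrix.diagonal_mul, Matrix.submatrix_apply, Matrix.mul_apply,
        Matrix.diagonal_apply, Finset.sum_ite_eq, ite_mul]
    have hdetW : (Matrix.detRowAlternating fun p => W (rr p)) =
        (∏ p, t ^ (γ (rr p))) * (V.submatrix rr c).det := by
      rw [hWrr]
      show ((Matrix.diagonal fun p => t ^ (γ (rr p))) * (V.submatrix rr c)).det = _
      rw [Matrix.det_mul, Matrix.det_diagonal]
    rw [hdetW]
    set x1 := ∏ p, X p (rr p) with hx1
    set x3 := (V.submatrix rr c).det with hx3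
    have hx1mem : x1 ∈ O := Subring.prod_mem _ fun p _ => hU _ _
    have hx3mem : x3 ∈ O := aux_det_mem O _ fun p q => hV _ _
    by_cases h1 : x1 = 0
    · left; rw [h1]; simp
    by_cases h3 : x3 = 0
    · left; rw [h3]; simp
    right
    have htprod : (∏ p, t ^ (γ (rr p))) ≠ 0 :=
      Finset.prod_ne_zero_iff.2 fun p _ => zpow_ne_zero _ ht0
    have hne : x1 * ((∏ p, t ^ (γ (rr p))) * x3) ≠ 0 :=
      mul_ne_zero h1 (mul_ne_zero htprod h3)
    rw [smul_eq_mul, hv_mul _ _ h1 (mul_ne_zero htprod h3), hv_mul _ _ htprod h3]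
    have hvx1 : 0 ≤ v x1 := by
      rcases (hO x1).1 hx1mem with h | h
      · exact absurd h h1
      · exact h
    have hvx3 : 0 ≤ v x3 := by
      rcases (hO x3).1 hx3mem with h | h
      · exact absurd h h3
      · exact h
    have hvt : v (∏ p, t ^ (γ (rr p))) = ∑ p, γ (rr p) := by
      rw [aux_v_prod hv_mul _ _ fun p _ => zpow_ne_zero _ ht0]
      exact Finset.sum_congr rfl fun p _ => aux_v_zpow hv_mul ht0 ht1 _
    have hsums : bound ≤ ∑ p, γ (rr p) := by
      have himg : ∑ p, γ (rr p) = ∑ l ∈ Finset.image rr Finset.univ, γ l := by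
        rw [Finset.sum_image (fun x _ y _ h => hinj h)]
      have hcard : (Finset.image rr Finset.univ).card = Fintype.card ι := by
        rw [Finset.card_image_of_injective _ hinj, Finset.card_univ]
      rw [himg, hbound, ← hcard]
      exact aux_sum_smallest γ hmono _
    omega
  · left
    have : (Matrix.detRowAlternating fun p => W (rr p)) = 0 := by
      apply AlternatingMap.map_eq_zero_of_not_injective
      intro hcon
      apply hinj
      intro p p' hpp
      exact hcon (congrArg W hpp)
    rw [this, smul_zero]

theorem aux_bwd {L : Type*} [Field L] (v : L → ℤ) (t : L)
    (hv_mul : ∀ x y : L, x ≠ 0 → y ≠ 0 → v (x * y) = v x + v y)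
    (ht0 : t ≠ 0) (ht1 : v t = 1)
    (O : Subring L) (hO : ∀ x : L, x ∈ O ↔ x = 0 ∨ 0 ≤ v x)
    (n m : ℕ)
    (A : Matrix (Fin n) (Fin n) L)
    (B : Matrix (Fin m) (Fin m) L)
    (ρ : Equiv.Perm (Fin n)) (hAρ : ∀ i j, A i j ≠ 0 ↔ j = ρ i)
    (π : Equiv.Perm (Fin m)) (hBπ : ∀ i j, B i j ≠ 0 ↔ i = π j)
    (C : Matrix (Fin n) (Fin m) L)
    (γ : Fin (n + m) → ℤ)
    (e : Fin (n + m) ≃ (Fin n ⊕ Fin m))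
    (hγ : ∀ i, γ i = Sum.elim (fun i' => v (A i' (ρ i'))) (fun j' => v (B (π j') j')) (e i))
    (hcond : ∀ i j, C i j = 0 ∨ min (v (A i (ρ i))) (v (B (π j) j)) ≤ v (C i j)) :
    ∃ U V : Matrix (Fin (n + m)) (Fin (n + m)) O, IsUnit U.det ∧ IsUnit V.det ∧
        Matrix.reindex finSumFinEquiv finSumFinEquiv (Matrix.fromBlocks A C 0 B) =
          U.map (fun x => (x : L)) * Matrix.diagonal (fun i => t ^ (γ i)) *
            V.map (fun x => (x : L)) := by
  classical
  set f : (Fin n ⊕ Fin m) ≃ Fin (n + m) := finSumFinEquiv with hf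
  set a : Fin n → L := fun i => A i (ρ i) with haa
  set b : Fin m → L := fun j => B (π j) j with hbb
  have ha : ∀ i, a i ≠ 0 := fun i => (hAρ i (ρ i)).2 rfl
  have hb : ∀ j, b j ≠ 0 := fun j => (hBπ (π j) j).2 rfl
  have hAentry : ∀ i j, A i j = if j = ρ i then a i else 0 := by
    intro i j
    by_cases h : j = ρ i
    · rw [if_pos h, h]
    · rw [if_neg h]
      by_contra hne
      exact h ((hAρ i j).1 hne)
  have hBentry : ∀ i j, B i j = if i = π j then b j else 0 := by
    intro i j
    by_cases h : i = π j
    · rw [if_pos h, h]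
    · rw [if_neg h]
      by_contra hne
      exact h ((hBπ i j).1 hne)
  -- pieces
  set C₁ : Matrix (Fin n) (Fin m) L :=
    Matrix.of (fun i j => if v (a i) ≤ v (b j) then C i j else 0) with hC₁
  set C₂ : Matrix (Fin n) (Fin m) L :=
    Matrix.of (fun i j => if v (a i) ≤ v (b j) then 0 else C i j) with hC₂
  set F₁ : Matrix (Fin n) (Fin m) L :=
    Matrix.of (fun p j => (a (ρ.symm p))⁻¹ * C₁ (ρ.symm p) j) with hF₁
  set E₂ : Matrix (Fin n) (Fin m) L :=
    Matrix.of (fun i q => C₂ i (π.symm q) * (b (π.symm q))⁻¹) with hE₂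
  set u : Fin n → L := fun i => a i * t ^ (-(v (a i))) with hu
  set w : Fin m → L := fun j => t ^ (-(v (b j))) * b j with hw
  set Pρmat : Matrix (Fin n) (Fin n) L := Matrix.of (fun i j => if j = ρ i then 1 else 0)
    with hPρ
  set Pπmat : Matrix (Fin m) (Fin m) L := Matrix.of (fun i j => if i = π j then 1 else 0)
    with hPπ
  set N₁ : Matrix (Fin n ⊕ Fin m) (Fin n ⊕ Fin m) L := Matrix.fromBlocks 1 E₂ 0 1 with hN₁
  set N₂ : Matrix (Fin n ⊕ Fin m) (Fin n ⊕ Fin m) L := Matrix.fromBlocks 1 F₁ 0 1 with hN₂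
  set K₁ : Matrix (Fin n ⊕ Fin m) (Fin n ⊕ Fin m) L :=
    Matrix.fromBlocks (Matrix.diagonal u) 0 0 Pπmat with hK₁
  set K₂ : Matrix (Fin n ⊕ Fin m) (Fin n ⊕ Fin m) L :=
    Matrix.fromBlocks Pρmat 0 0 (Matrix.diagonal w) with hK₂
  set δt : Fin n ⊕ Fin m → L :=
    Sum.elim (fun i => t ^ (v (a i))) (fun j => t ^ (v (b j))) with hδt
  -- block factorization over the sum type
  have hAfact : Matrix.diagonal u * Matrix.diagonal (fun i => t ^ (v (a i))) * Pρmat = A := by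
    ext i j
    rw [Matrix.diagonal_mul_diagonal, Matrix.diagonal_mul, hAentry i j]
    simp only [hPρ, Matrix.of_apply, mul_ite, mul_one, mul_zero]
    congr 1
    rw [hu, mul_assoc, ← zpow_add₀ ht0]
    simp
  have hBfact : Pπmat * (Matrix.diagonal (fun j => t ^ (v (b j))) * Matrix.diagonal w) = B := by
    ext i j
    rw [Matrix.diagonal_mul_diagonal, Matrix.mul_diagonal, hBentry i j]
    simp only [hPπ, Matrix.of_apply, ite_mul, one_mul, zero_mul]
    congr 1
    rw [hw, ← mul_assoc, ← zpow_add₀ ht0]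
    simp
  have hAF₁ : A * F₁ = C₁ := by
    ext i j
    rw [Matrix.mul_apply]
    rw [Finset.sum_eq_single (ρ i)]
    · rw [hAentry, if_pos rfl]
      simp only [hF₁, Matrix.of_apply, Equiv.symm_apply_apply]
      rw [← mul_assoc, mul_inv_cancel₀ (ha i), one_mul]
    · intro p _ hp
      rw [hAentry, if_neg hp, zero_mul]
    · intro h
      exact absurd (Finset.mem_univ _) h
  have hE₂B : E₂ * B = C₂ := by
    ext i j
    rw [Matrix.mul_apply]
    rw [Finset.sum_eq_single (π j)]
    · rw [hBentry, if_pos rfl]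
      simp only [hE₂, Matrix.of_apply, Equiv.symm_apply_apply]
      rw [mul_assoc, inv_mul_cancel₀ (hb j), mul_one]
    · intro q _ hq
      rw [hBentry, if_neg hq, mul_zero]
    · intro h
      exact absurd (Finset.mem_univ _) h
  have hCsum : C₁ + C₂ = C := by
    ext i j
    by_cases h : v (a i) ≤ v (b j) <;> simp [hC₁, hC₂, h]
  have hblocks : Matrix.fromBlocks A C 0 B = N₁ * (K₁ * Matrix.diagonal δt * K₂) * N₂ := by
    have hmid : K₁ * Matrix.diagonal δt * K₂ = Matrix.fromBlocks A 0 0 B := by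
      rw [hδt, ← Matrix.fromBlocks_diagonal, hK₁, hK₂, Matrix.fromBlocks_multiply,
        Matrix.fromBlocks_multiply]
      simp only [Matrix.mul_zero, Matrix.zero_mul, add_zero, zero_add, Matrix.mul_one,
        Matrix.one_mul]
      rw [hAfact, Matrix.mul_assoc, hBfact]
    rw [hmid, hN₁, hN₂, Matrix.fromBlocks_multiply, Matrix.fromBlocks_multiply]
    simp only [Matrix.mul_zero, Matrix.zero_mul, add_zero, zero_add, Matrix.mul_one,
      Matrix.one_mul]
    rw [hAF₁, hE₂B, hCsum]
  -- permutation fixing the diagonal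
  set τ : Equiv.Perm (Fin (n + m)) := f.symm.trans e.symm with hτ
  have hτe : ∀ x, e (τ x) = f.symm x := by
    intro x
    rw [hτ]
    simp
  set X := (N₁ * K₁).submatrix ⇑f.symm ⇑f.symm with hX
  set Y := (K₂ * N₂).submatrix ⇑f.symm ⇑f.symm with hY
  set P : Matrix (Fin (n + m)) (Fin (n + m)) L :=
    (1 : Matrix (Fin (n + m)) (Fin (n + m)) L).submatrix ⇑τ ⇑(Equiv.refl (Fin (n + m))) with hP
  set Q : Matrix (Fin (n + m)) (Fin (n + m)) L :=
    (1 : Matrix (Fin (n + m)) (Fin (n + m)) L).submatrix ⇑(Equiv.refl (Fin (n + m))) ⇑τ with hQ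
  have hdelim : ∀ y : Fin n ⊕ Fin m,
      t ^ (Sum.elim (fun i' => v (A i' (ρ i'))) (fun j' => v (B (π j') j')) y) = δt y := by
    rintro (i | j) <;> simp [hδt, haa, hbb]
  have hPDQ : P * (Matrix.diagonal fun i => t ^ (γ i)) * Q =
      (Matrix.diagonal δt).submatrix ⇑f.symm ⇑f.symm := by
    rw [hP, hQ, Matrix.one_submatrix_mul (⇑τ) (Equiv.refl (Fin (n + m)))
      (Matrix.diagonal fun i => t ^ (γ i)),
      Matrix.mul_submatrix_one (Equiv.refl (Fin (n + m))) (⇑τ)]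
    simp only [Equiv.refl_symm, Equiv.coe_refl, Function.id_comp, Matrix.submatrix_submatrix,
      Function.comp_id]
    rw [Matrix.submatrix_diagonal _ _ τ.injective,
      Matrix.submatrix_diagonal _ _ f.symm.injective]
    have hfun : (fun i => t ^ γ i) ∘ ⇑τ = δt ∘ ⇑f.symm := by
      funext x
      show t ^ γ (τ x) = δt (f.symm x)
      rw [hγ (τ x), hτe x, hdelim]
    rw [hfun]
  have hG : Matrix.reindex f f (Matrix.fromBlocks A C 0 B) =
      (X * P) * (Matrix.diagonal fun i => t ^ (γ i)) * (Q * Y) := by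
    rw [Matrix.reindex_apply, hblocks]
    have h1 : N₁ * (K₁ * Matrix.diagonal δt * K₂) * N₂ =
        (N₁ * K₁) * (Matrix.diagonal δt * (K₂ * N₂)) := by
      simp only [Matrix.mul_assoc]
    rw [h1,
      ← Matrix.submatrix_mul_equiv (N₁ * K₁) (Matrix.diagonal δt * (K₂ * N₂)) ⇑f.symm f.symm
        ⇑f.symm,
      ← Matrix.submatrix_mul_equiv (Matrix.diagonal δt) (K₂ * N₂) ⇑f.symm f.symm ⇑f.symm,
      ← hX, ← hY, ← hPDQ]
    simp only [Matrix.mul_assoc]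
  -- memberships
  have hmemO : ∀ x : L, x = 0 ∨ 0 ≤ v x → x ∈ O := fun x h => (hO x).2 h
  have hvu : ∀ i, v (u i) = 0 := by
    intro i
    show v (a i * t ^ (-v (a i))) = 0
    rw [hv_mul _ _ (ha i) (zpow_ne_zero _ ht0), aux_v_zpow hv_mul ht0 ht1]
    ring
  have hu0 : ∀ i, u i ≠ 0 := fun i => mul_ne_zero (ha i) (zpow_ne_zero _ ht0)
  have hvw : ∀ j, v (w j) = 0 := by
    intro j
    show v (t ^ (-v (b j)) * b j) = 0
    rw [hv_mul _ _ (zpow_ne_zero _ ht0) (hb j), aux_v_zpow hv_mul ht0 ht1]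
    ring
  have hw0 : ∀ j, w j ≠ 0 := fun j => mul_ne_zero (zpow_ne_zero _ ht0) (hb j)
  have hE₂mem : ∀ i q, E₂ i q ∈ O := by
    intro i q
    rw [hE₂]
    simp only [Matrix.of_apply, hC₂]
    set j := π.symm q with hj
    by_cases hle : v (a i) ≤ v (b j)
    · rw [if_pos hle, zero_mul]
      exact O.zero_mem
    · rw [if_neg hle]
      by_cases hc : C i j = 0
      · rw [hc, zero_mul]
        exact O.zero_mem
      · apply hmemO
        right
        rw [hv_mul _ _ hc (inv_ne_zero (hb j)), aux_v_inv hv_mul _ (hb j)]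
        have := hcond i j
        rcases this with h | h
        · exact absurd h hc
        · have e1 : v (A i (ρ i)) = v (a i) := rfl
          have e2 : v (B (π j) j) = v (b j) := rfl
          rw [e1, e2, min_eq_right (le_of_lt (lt_of_not_ge hle))] at h
          omega
  have hF₁mem : ∀ p j, F₁ p j ∈ O := by
    intro p j
    rw [hF₁]
    simp only [Matrix.of_apply, hC₁]
    set i := ρ.symm p with hi
    by_cases hle : v (a i) ≤ v (b j)
    · rw [if_pos hle]
      by_cases hc : C i j = 0
      · rw [hc, mul_zero]
        exact O.zero_mem
      · apply hmemO
        right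
        rw [hv_mul _ _ (inv_ne_zero (ha i)) hc, aux_v_inv hv_mul _ (ha i)]
        have := hcond i j
        rcases this with h | h
        · exact absurd h hc
        · have e1 : v (A i (ρ i)) = v (a i) := rfl
          have e2 : v (B (π j) j) = v (b j) := rfl
          rw [e1, e2, min_eq_left hle] at h
          omega
    · rw [if_neg hle, mul_zero]
      exact O.zero_mem
  have h1mem : ∀ {κ : Type} (_ : DecidableEq κ) (x y : κ), (1 : Matrix κ κ L) x y ∈ O := by
    intro κ hκ x y
    rw [Matrix.one_apply]
    split
    · exact O.one_mem
    · exact O.zero_mem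
  have hNKmem : ∀ p q, (N₁ * K₁) p q ∈ O := by
    have hN₁mem : ∀ p q, N₁ p q ∈ O := by
      rintro (i | j) (i' | j') <;>
        simp only [hN₁, Matrix.fromBlocks_apply₁₁, Matrix.fromBlocks_apply₁₂,
          Matrix.fromBlocks_apply₂₁, Matrix.fromBlocks_apply₂₂, Matrix.zero_apply]
      · exact h1mem _ _ _
      · exact hE₂mem _ _
      · exact O.zero_mem
      · exact h1mem _ _ _
    have hK₁mem : ∀ p q, K₁ p q ∈ O := by
      rintro (i | j) (i' | j') <;>
        simp only [hK₁, Matrix.fromBlocks_apply₁₁, Matrix.fromBlocks_apply₁₂,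
          Matrix.fromBlocks_apply₂₁, Matrix.fromBlocks_apply₂₂, Matrix.zero_apply]
      · rw [Matrix.diagonal_apply]
        split
        · exact hmemO _ (Or.inr (le_of_eq (hvu _).symm))
        · exact O.zero_mem
      · exact O.zero_mem
      · exact O.zero_mem
      · rw [hPπ]
        simp only [Matrix.of_apply]
        split
        · exact O.one_mem
        · exact O.zero_mem
    intro p q
    rw [Matrix.mul_apply]
    exact Subring.sum_mem _ fun l _ => O.mul_mem (hN₁mem _ _) (hK₁mem _ _)
  have hKNmem : ∀ p q, (K₂ * N₂) p q ∈ O := by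
    have hN₂mem : ∀ p q, N₂ p q ∈ O := by
      rintro (i | j) (i' | j') <;>
        simp only [hN₂, Matrix.fromBlocks_apply₁₁, Matrix.fromBlocks_apply₁₂,
          Matrix.fromBlocks_apply₂₁, Matrix.fromBlocks_apply₂₂, Matrix.zero_apply]
      · exact h1mem _ _ _
      · exact hF₁mem _ _
      · exact O.zero_mem
      · exact h1mem _ _ _
    have hK₂mem : ∀ p q, K₂ p q ∈ O := by
      rintro (i | j) (i' | j') <;>
        simp only [hK₂, Matrix.fromBlocks_apply₁₁, Matrix.fromBlocks_apply₁₂,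
          Matrix.fromBlocks_apply₂₁, Matrix.fromBlocks_apply₂₂, Matrix.zero_apply]
      · rw [hPρ]
        simp only [Matrix.of_apply]
        split
        · exact O.one_mem
        · exact O.zero_mem
      · exact O.zero_mem
      · exact O.zero_mem
      · rw [Matrix.diagonal_apply]
        split
        · exact hmemO _ (Or.inr (le_of_eq (hvw _).symm))
        · exact O.zero_mem
    intro p q
    rw [Matrix.mul_apply]
    exact Subring.sum_mem _ fun l _ => O.mul_mem (hK₂mem _ _) (hN₂mem _ _)
  have hULmem : ∀ p q, (X * P) p q ∈ O := by
    intro p q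
    rw [Matrix.mul_apply]
    refine Subring.sum_mem _ fun l _ => O.mul_mem ?_ ?_
    · rw [hX, Matrix.submatrix_apply]
      exact hNKmem _ _
    · rw [hP, Matrix.submatrix_apply]
      exact h1mem _ _ _
  have hVLmem : ∀ p q, (Q * Y) p q ∈ O := by
    intro p q
    rw [Matrix.mul_apply]
    refine Subring.sum_mem _ fun l _ => O.mul_mem ?_ ?_
    · rw [hQ, Matrix.submatrix_apply]
      exact h1mem _ _ _
    · rw [hY, Matrix.submatrix_apply]
      exact hKNmem _ _
  have hdetN₁ : N₁.det = 1 := by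
    rw [hN₁, Matrix.det_fromBlocks_zero₂₁, Matrix.det_one, Matrix.det_one, mul_one]
  have hdetN₂ : N₂.det = 1 := by
    rw [hN₂, Matrix.det_fromBlocks_zero₂₁, Matrix.det_one, Matrix.det_one, mul_one]
  have hdetK₁ : K₁.det = (∏ i, u i) * Pπmat.det := by
    rw [hK₁, Matrix.det_fromBlocks_zero₂₁, Matrix.det_diagonal]
  have hdetK₂ : K₂.det = Pρmat.det * (∏ j, w j) := by
    rw [hK₂, Matrix.det_fromBlocks_zero₂₁, Matrix.det_diagonal]
  -- determinants
  have hsign : ∀ s : ℤˣ, ((s : ℤ) : L) ≠ 0 ∧ v ((s : ℤ) : L) = 0 := by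
    intro s
    rcases Int.units_eq_one_or s with h | h <;> subst h
    · constructor
      · simp
      · push_cast
        exact aux_v_one hv_mul
    · constructor
      · simp
      · push_cast
        rw [show ((-1 : L)) = -(1 : L) by ring, aux_v_neg hv_mul 1 one_ne_zero]
        exact aux_v_one hv_mul
  have hPπeq : Pπmat = (π⁻¹).permMatrix L := by
    ext i j
    rw [hPπ]
    simp only [Equiv.Perm.permMatrix, PEquiv.toMatrix_apply, Equiv.toPEquiv_apply,
      Matrix.of_apply, Option.mem_def, Option.some.injEq]
    by_cases h : i = π j
    · have h2 : π⁻¹ i = j := by rw [h]; simp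
      rw [if_pos h, if_pos h2]
    · have h2 : ¬ (π⁻¹ i = j) := fun hh => h (by rw [← hh]; simp)
      rw [if_neg h, if_neg h2]
  have hPρeq : Pρmat = ρ.permMatrix L := by
    ext i j
    rw [hPρ]
    simp only [Equiv.Perm.permMatrix, PEquiv.toMatrix_apply, Equiv.toPEquiv_apply,
      Matrix.of_apply, Option.mem_def, Option.some.injEq]
    by_cases h : j = ρ i
    · rw [if_pos h, if_pos h.symm]
    · rw [if_neg h, if_neg (fun hh => h hh.symm)]
  have hPeq : P = τ.permMatrix L := by
    ext x y
    rw [hP]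
    simp only [Equiv.Perm.permMatrix, PEquiv.toMatrix_apply, Equiv.toPEquiv_apply,
      Matrix.submatrix_apply, Equiv.coe_refl, id_eq, Matrix.one_apply,
      Option.mem_def, Option.some.injEq]

  have hQeq : Q = (τ⁻¹).permMatrix L := by
    ext x y
    rw [hQ]
    simp only [Equiv.Perm.permMatrix, PEquiv.toMatrix_apply, Equiv.toPEquiv_apply,
      Matrix.submatrix_apply, Equiv.coe_refl, id_eq, Matrix.one_apply,
      Option.mem_def, Option.some.injEq]
    by_cases h : x = τ y
    · have h2 : τ⁻¹ x = y := by rw [h]; simp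
      rw [if_pos h, if_pos h2]
    · have h2 : ¬ (τ⁻¹ x = y) := fun hh => h (by rw [← hh]; simp)
      rw [if_neg h, if_neg h2]
  have hprodu0 : (∏ i, u i) ≠ 0 := Finset.prod_ne_zero_iff.2 fun i _ => hu0 i
  have hvprodu : v (∏ i, u i) = 0 := by
    rw [aux_v_prod hv_mul _ _ fun i _ => hu0 i]
    simp [hvu]
  have hprodw0 : (∏ j, w j) ≠ 0 := Finset.prod_ne_zero_iff.2 fun j _ => hw0 j
  have hvprodw : v (∏ j, w j) = 0 := by
    rw [aux_v_prod hv_mul _ _ fun j _ => hw0 j]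
    simp [hvw]
  have hdetXP : (X * P).det =
      ((∏ i, u i) * (((Equiv.Perm.sign π⁻¹ : ℤˣ) : ℤ) : L)) *
        (((Equiv.Perm.sign τ : ℤˣ) : ℤ) : L) := by
    rw [Matrix.det_mul, hX, Matrix.det_submatrix_equiv_self, Matrix.det_mul, hdetN₁, one_mul,
      hdetK₁, hPπeq, Matrix.det_permutation, hPeq, Matrix.det_permutation]
  have hdetQY : (Q * Y).det =
      (((Equiv.Perm.sign τ⁻¹ : ℤˣ) : ℤ) : L) *
        ((((Equiv.Perm.sign ρ : ℤˣ) : ℤ) : L) * (∏ j, w j)) := by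
    rw [Matrix.det_mul, hY, Matrix.det_submatrix_equiv_self, Matrix.det_mul, hdetN₂, mul_one,
      hdetK₂, hPρeq, Matrix.det_permutation, hQeq, Matrix.det_permutation]
  have hXP0 : (X * P).det ≠ 0 := by
    rw [hdetXP]
    exact mul_ne_zero (mul_ne_zero hprodu0 (hsign _).1) (hsign _).1
  have hvXP : v ((X * P).det) = 0 := by
    rw [hdetXP, hv_mul _ _ (mul_ne_zero hprodu0 (hsign _).1) (hsign _).1,
      hv_mul _ _ hprodu0 (hsign _).1, hvprodu, (hsign (Equiv.Perm.sign π⁻¹)).2,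
      (hsign (Equiv.Perm.sign τ)).2]
    omega
  have hQY0 : (Q * Y).det ≠ 0 := by
    rw [hdetQY]
    exact mul_ne_zero (hsign _).1 (mul_ne_zero (hsign _).1 hprodw0)
  have hvQY : v ((Q * Y).det) = 0 := by
    rw [hdetQY, hv_mul _ _ (hsign _).1 (mul_ne_zero (hsign _).1 hprodw0),
      hv_mul _ _ (hsign _).1 hprodw0, hvprodw, (hsign (Equiv.Perm.sign τ⁻¹)).2,
      (hsign (Equiv.Perm.sign ρ)).2]
    omega
  obtain ⟨U', hU'unit, hU'map⟩ := aux_lift O (X * P) hULmem hXP0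
    (hmemO _ (Or.inr (by rw [aux_v_inv hv_mul _ hXP0, hvXP]; simp)))
  obtain ⟨V', hV'unit, hV'map⟩ := aux_lift O (Q * Y) hVLmem hQY0
    (hmemO _ (Or.inr (by rw [aux_v_inv hv_mul _ hQY0, hvQY]; simp)))
  exact ⟨U', V', hU'unit, hV'unit, by rw [hU'map, hV'map]; exact hG⟩

theorem aux_fwd {L : Type*} [Field L] (v : L → ℤ) (t : L)
    (hv_mul : ∀ x y : L, x ≠ 0 → y ≠ 0 → v (x * y) = v x + v y)
    (hv_add : ∀ x y : L, x ≠ 0 → y ≠ 0 → x + y ≠ 0 → min (v x) (v y) ≤ v (x + y))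
    (ht0 : t ≠ 0) (ht1 : v t = 1)
    (O : Subring L) (hO : ∀ x : L, x ∈ O ↔ x = 0 ∨ 0 ≤ v x)
    (n m : ℕ)
    (A : Matrix (Fin n) (Fin n) L)
    (B : Matrix (Fin m) (Fin m) L)
    (ρ : Equiv.Perm (Fin n)) (hAρ : ∀ i j, A i j ≠ 0 ↔ j = ρ i)
    (π : Equiv.Perm (Fin m)) (hBπ : ∀ i j, B i j ≠ 0 ↔ i = π j)
    (C : Matrix (Fin n) (Fin m) L)
    (γ : Fin (n + m) → ℤ) (hγmono : Monotone γ)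
    (e : Fin (n + m) ≃ (Fin n ⊕ Fin m))
    (hγ : ∀ i, γ i = Sum.elim (fun i' => v (A i' (ρ i'))) (fun j' => v (B (π j') j')) (e i))
    (hex : ∃ U V : Matrix (Fin (n + m)) (Fin (n + m)) O, IsUnit U.det ∧ IsUnit V.det ∧
        Matrix.reindex finSumFinEquiv finSumFinEquiv (Matrix.fromBlocks A C 0 B) =
          U.map (fun x => (x : L)) * Matrix.diagonal (fun i => t ^ (γ i)) *
            V.map (fun x => (x : L))) :
    ∀ i j, C i j = 0 ∨ min (v (A i (ρ i))) (v (B (π j) j)) ≤ v (C i j) := by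
  classical
  obtain ⟨U, V, hUunit, hVunit, hEq⟩ := hex
  intro i j
  by_cases hc : C i j = 0
  · exact Or.inl hc
  right
  have ha : ∀ i', A i' (ρ i') ≠ 0 := fun i' => (hAρ i' (ρ i')).2 rfl
  have hb : ∀ j', B (π j') j' ≠ 0 := fun j' => (hBπ (π j') j').2 rfl
  have hAentry : ∀ i' j', A i' j' = if j' = ρ i' then A i' (ρ i') else 0 := by
    intro i' j'
    by_cases h : j' = ρ i'
    · rw [if_pos h, h]
    · rw [if_neg h]
      by_contra hne
      exact h ((hAρ i' j').1 hne)
  have hBentry : ∀ i' j', B i' j' = if i' = π j' then B (π j') j' else 0 := by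
    intro i' j'
    by_cases h : i' = π j'
    · rw [if_pos h, h]
    · rw [if_neg h]
      by_contra hne
      exact h ((hBπ i' j').1 hne)
  set f : (Fin n ⊕ Fin m) ≃ Fin (n + m) := finSumFinEquiv with hf
  set c₀ : ℤ := min (v (A i (ρ i))) (v (B (π j) j)) with hc₀
  set S₁ : Finset (Fin n) := Finset.filter (fun i' => v (A i' (ρ i')) < c₀) Finset.univ with hS₁
  set S₂ : Finset (Fin m) := Finset.filter (fun j' => v (B (π j') j') < c₀) Finset.univ with hS₂
  have hiS₁ : i ∉ S₁ := by
    rw [hS₁]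
    simp only [Finset.mem_filter, Finset.mem_univ, true_and, not_lt]
    exact min_le_left _ _
  have hjS₂ : j ∉ S₂ := by
    rw [hS₂]
    simp only [Finset.mem_filter, Finset.mem_univ, true_and, not_lt]
    exact min_le_right _ _
  set rmap : (({x // x ∈ S₁} ⊕ Unit) ⊕ {x // x ∈ S₂}) → (Fin n ⊕ Fin m) :=
    Sum.elim (Sum.elim (fun s => Sum.inl s.1) (fun _ => Sum.inl i))
      (fun s => Sum.inr (π s.1)) with hrmap
  set cmap : (({x // x ∈ S₁} ⊕ Unit) ⊕ {x // x ∈ S₂}) → (Fin n ⊕ Fin m) :=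
    Sum.elim (Sum.elim (fun s => Sum.inl (ρ s.1)) (fun _ => Sum.inr j))
      (fun s => Sum.inr s.1) with hcmap
  have hrinj : Function.Injective rmap := by
    rintro ((s | u) | s) ((s' | u') | s') h <;>
      simp only [hrmap, Sum.elim_inl, Sum.elim_inr, Sum.inl.injEq, Sum.inr.injEq,
        reduceCtorEq] at h
    · exact congrArg _ (congrArg _ (Subtype.ext h))
    · exact absurd (h ▸ s.2) hiS₁
    · exact absurd (h.symm ▸ s'.2) hiS₁
    · rfl
    · exact congrArg _ (Subtype.ext (π.injective h))
  have hcinj : Function.Injective cmap := by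
    rintro ((s | u) | s) ((s' | u') | s') h <;>
      simp only [hcmap, Sum.elim_inl, Sum.elim_inr, Sum.inl.injEq, Sum.inr.injEq,
        reduceCtorEq] at h
    · exact congrArg _ (congrArg _ (Subtype.ext (ρ.injective h)))
    · rfl
    · exact absurd (h.symm ▸ s'.2) hjS₂
    · exact absurd (h ▸ s.2) hjS₂
    · exact congrArg _ (Subtype.ext h)
  set Z := (Matrix.fromBlocks A C 0 B).submatrix rmap cmap with hZ
  set Z11 : Matrix ({x // x ∈ S₁} ⊕ Unit) ({x // x ∈ S₁} ⊕ Unit) L :=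
    Matrix.fromBlocks (Matrix.diagonal fun s : {x // x ∈ S₁} => A s.1 (ρ s.1))
      (Matrix.of fun s _ => C s.1 j) 0 (Matrix.of fun _ _ => C i j) with hZ11
  set Z12 : Matrix ({x // x ∈ S₁} ⊕ Unit) {x // x ∈ S₂} L :=
    Matrix.of (fun p s' => C (Sum.elim (fun s : {x // x ∈ S₁} => s.1) (fun _ => i) p) s'.1)
    with hZ12
  set Z22 : Matrix {x // x ∈ S₂} {x // x ∈ S₂} L :=
    Matrix.diagonal (fun s : {x // x ∈ S₂} => B (π s.1) s.1) with hZ22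
  have hZeq : Z = Matrix.fromBlocks Z11 Z12 0 Z22 := by
    ext p q
    rcases p with ((s | u) | s) <;> rcases q with ((s' | u') | s') <;>
      simp only [hZ, hZ11, hZ12, hZ22, Matrix.submatrix_apply, hrmap, hcmap,
        Sum.elim_inl, Sum.elim_inr, Matrix.fromBlocks_apply₁₁, Matrix.fromBlocks_apply₁₂,
        Matrix.fromBlocks_apply₂₁, Matrix.fromBlocks_apply₂₂, Matrix.of_apply,
        Matrix.zero_apply]
    · rw [hAentry]
      by_cases h : s = s'
      · rw [if_pos (by rw [h]), h, Matrix.diagonal_apply_eq]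
      · rw [if_neg (fun hh => h (Subtype.ext (ρ.injective hh)).symm),
          Matrix.diagonal_apply_ne _ h]
    · rw [hAentry, if_neg (fun hh => hiS₁ (by rw [← ρ.injective hh]; exact s'.2))]
    · rw [hBentry, if_neg (fun hh => hjS₂ (by rw [← π.injective hh]; exact s.2))]
    · rw [hBentry]
      by_cases h : s = s'
      · rw [if_pos (by rw [h]), h, Matrix.diagonal_apply_eq]
      · rw [if_neg (fun hh => h (Subtype.ext (π.injective hh))),
          Matrix.diagonal_apply_ne _ h]
  have hdetZ : Z.det = ((∏ s : {x // x ∈ S₁}, A s.1 (ρ s.1)) * C i j) *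
      ∏ s : {x // x ∈ S₂}, B (π s.1) s.1 := by
    rw [hZeq, Matrix.det_fromBlocks_zero₂₁, hZ11, Matrix.det_fromBlocks_zero₂₁,
      Matrix.det_diagonal, hZ22, Matrix.det_diagonal, Matrix.det_unique]
    rfl
  have hprodA0 : (∏ s : {x // x ∈ S₁}, A s.1 (ρ s.1)) ≠ 0 :=
    Finset.prod_ne_zero_iff.2 fun s _ => ha s.1
  have hprodB0 : (∏ s : {x // x ∈ S₂}, B (π s.1) s.1) ≠ 0 :=
    Finset.prod_ne_zero_iff.2 fun s _ => hb s.1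
  have hZ0 : Z.det ≠ 0 := by
    rw [hdetZ]
    exact mul_ne_zero (mul_ne_zero hprodA0 hc) hprodB0
  have hvZ : v Z.det = ((∑ s : {x // x ∈ S₁}, v (A s.1 (ρ s.1))) + v (C i j)) +
      ∑ s : {x // x ∈ S₂}, v (B (π s.1) s.1) := by
    rw [hdetZ, hv_mul _ _ (mul_ne_zero hprodA0 hc) hprodB0, hv_mul _ _ hprodA0 hc,
      aux_v_prod hv_mul _ _ (fun s _ => ha s.1), aux_v_prod hv_mul _ _ (fun s _ => hb s.1)]
  -- apply the key bound
  have hmemU : ∀ p q, (U.map (fun x => (x : L))) p q ∈ O := by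
    intro p q
    rw [Matrix.map_apply]
    exact SetLike.coe_mem _
  have hmemV : ∀ p q, (V.map (fun x => (x : L))) p q ∈ O := by
    intro p q
    rw [Matrix.map_apply]
    exact SetLike.coe_mem _
  have hkey := aux_key hv_mul hv_add ht0 ht1 O hO γ hγmono
    (U.map (fun x => (x : L))) (V.map (fun x => (x : L))) hmemU hmemV
    (⇑f ∘ rmap) (⇑f ∘ cmap)
  have hZG : (U.map (fun x => (x : L)) * (Matrix.diagonal fun p => t ^ (γ p)) *
      V.map (fun x => (x : L))).submatrix (⇑f ∘ rmap) (⇑f ∘ cmap) = Z := by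
    rw [← hEq, Matrix.reindex_apply, Matrix.submatrix_submatrix, hZ]
    have h1 : ⇑f.symm ∘ (⇑f ∘ rmap) = rmap := by funext x; simp
    have h2 : ⇑f.symm ∘ (⇑f ∘ cmap) = cmap := by funext x; simp
    rw [h1, h2]
  rw [hZG] at hkey
  rcases hkey with hzero | hbound
  · exact absurd hzero hZ0
  -- endgame
  set k := Fintype.card (({x // x ∈ S₁} ⊕ Unit) ⊕ {x // x ∈ S₂}) with hk
  have hcardι : k = S₁.card + 1 + S₂.card := by
    rw [hk]
    simp [Fintype.card_sum]
  set T : Finset (Fin (n + m)) := Finset.filter (fun p => γ p < c₀) Finset.univ with hT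
  have hsum1 : ∑ p ∈ T, γ p =
      (∑ i' ∈ S₁, v (A i' (ρ i'))) + ∑ j' ∈ S₂, v (B (π j') j') := by
    rw [hT, Finset.sum_filter]
    have hstep := Fintype.sum_equiv e (fun p => if γ p < c₀ then γ p else 0)
      (fun y => if Sum.elim (fun i' => v (A i' (ρ i'))) (fun j' => v (B (π j') j')) y < c₀
          then Sum.elim (fun i' => v (A i' (ρ i'))) (fun j' => v (B (π j') j')) y else 0)
      (fun p => by simp only [hγ])
    rw [hstep, Fintype.sum_sum_type]
    simp only [Sum.elim_inl, Sum.elim_inr]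
    simp only [hS₁, hS₂, Finset.sum_filter]
    rfl
  have hTcard : T.card = S₁.card + S₂.card := by
    rw [hT, Finset.card_filter]
    have hstep := Fintype.sum_equiv e (fun p => if γ p < c₀ then (1 : ℕ) else 0)
      (fun y => if Sum.elim (fun i' => v (A i' (ρ i'))) (fun j' => v (B (π j') j')) y < c₀
          then (1 : ℕ) else 0)
      (fun p => by simp only [hγ])
    rw [hstep, Fintype.sum_sum_type]
    simp only [Sum.elim_inl, Sum.elim_inr]
    simp only [hS₁, hS₂, Finset.card_filter]
    rfl
  have hkN : k ≤ n + m := by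
    have h1 := Fintype.card_le_of_injective (⇑f ∘ rmap) (f.injective.comp hrinj)
    rw [hcardι]
    simpa using h1
  have hTsub : T ⊆ Finset.filter (fun l : Fin (n + m) => (l : ℕ) < k) Finset.univ := by
    intro p hp
    rw [hT, Finset.mem_filter] at hp
    rw [Finset.mem_filter]
    refine ⟨Finset.mem_univ _, ?_⟩
    by_contra hnp
    push_neg at hnp
    have hsubseg : Finset.filter (fun q : Fin (n + m) => q ≤ p) Finset.univ ⊆ T := by
      intro q hq
      rw [Finset.mem_filter] at hq
      rw [hT, Finset.mem_filter]
      exact ⟨Finset.mem_univ _, lt_of_le_of_lt (hγmono hq.2) hp.2⟩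
    have hcard2 : (Finset.filter (fun q : Fin (n + m) => q ≤ p) Finset.univ).card
        = (p : ℕ) + 1 := by
      have heq : Finset.filter (fun q : Fin (n + m) => q ≤ p) Finset.univ =
          Finset.filter (fun q : Fin (n + m) => (q : ℕ) < (p : ℕ) + 1) Finset.univ := by
        ext q
        simp only [Finset.mem_filter, Finset.mem_univ, true_and]
        rw [Fin.le_def, Nat.lt_succ_iff]
      rw [heq, aux_card_filter (by omega : (p : ℕ) + 1 ≤ n + m)]
    have hle2 := Finset.card_le_card hsubseg
    rw [hcard2] at hle2
    have hp2 : (p : ℕ) < n + m := p.2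
    omega
  have hIkcard : (Finset.filter (fun l : Fin (n + m) => (l : ℕ) < k) Finset.univ).card = k :=
    aux_card_filter hkN
  have hsdcard : ((Finset.filter (fun l : Fin (n + m) => (l : ℕ) < k) Finset.univ) \ T).card
      = 1 := by
    rw [Finset.card_sdiff_of_subset hTsub, hIkcard, hTcard, hcardι]
    omega
  have hsdbound : ∀ p ∈ (Finset.filter (fun l : Fin (n + m) => (l : ℕ) < k) Finset.univ) \ T,
      c₀ ≤ γ p := by
    intro p hp
    have h2 := (Finset.mem_sdiff.1 hp).2
    rw [hT, Finset.mem_filter] at h2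
    push_neg at h2
    exact h2 (Finset.mem_univ _)
  have hc₀le : c₀ ≤ ∑ p ∈ (Finset.filter (fun l : Fin (n + m) => (l : ℕ) < k)
      Finset.univ) \ T, γ p := by
    have h3 := Finset.card_nsmul_le_sum _ γ c₀ hsdbound
    rw [hsdcard, one_nsmul] at h3
    exact h3
  have hIksum : ∑ p ∈ Finset.filter (fun l : Fin (n + m) => (l : ℕ) < k) Finset.univ, γ p =
      (∑ p ∈ (Finset.filter (fun l : Fin (n + m) => (l : ℕ) < k) Finset.univ) \ T, γ p)
        + ∑ p ∈ T, γ p :=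
    (Finset.sum_sdiff hTsub).symm
  have hconv1 : ∑ s : {x // x ∈ S₁}, v (A s.1 (ρ s.1)) = ∑ i' ∈ S₁, v (A i' (ρ i')) :=
    Finset.sum_coe_sort S₁ (fun i' => v (A i' (ρ i')))
  have hconv2 : ∑ s : {x // x ∈ S₂}, v (B (π s.1) s.1) = ∑ j' ∈ S₂, v (B (π j') j') :=
    Finset.sum_coe_sort S₂ (fun j' => v (B (π j') j'))
  rw [hvZ, hconv1, hconv2] at hbound
  rw [hIksum, hsum1] at hbound
  linarith [hc₀le, hbound]

/-- Cartan criterion for block upper-triangular matrices with monomial diagonal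
blocks: `[[A, C], [0, B]] ∈ K diag(t^{γ_1},…,t^{γ_{n+m}}) K` iff every entry `c_{ij}` of `C`
is zero or has valuation at least `min {α_i, β_j}`. -/
theorem stmt_1 {L : Type*} [Field L] (v : L → ℤ) (t : L)
    (hv_mul : ∀ x y : L, x ≠ 0 → y ≠ 0 → v (x * y) = v x + v y)
    (hv_add : ∀ x y : L, x ≠ 0 → y ≠ 0 → x + y ≠ 0 → min (v x) (v y) ≤ v (x + y))
    (hv_surj : ∀ n : ℤ, ∃ x : L, x ≠ 0 ∧ v x = n)
    (ht0 : t ≠ 0) (ht1 : v t = 1)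
    (O : Subring L) (hO : ∀ x : L, x ∈ O ↔ x = 0 ∨ 0 ≤ v x)
    (n m : ℕ) (hn : 1 ≤ n) (hm : 1 ≤ m)
    (A : Matrix (Fin n) (Fin n) L) (hA : IsUnit A.det)
    (B : Matrix (Fin m) (Fin m) L) (hB : IsUnit B.det)
    -- `A` is monomial: the unique nonzero entry of row `i` sits in column `ρ i`
    (ρ : Equiv.Perm (Fin n)) (hAρ : ∀ i j, A i j ≠ 0 ↔ j = ρ i)
    -- `B` is monomial: the unique nonzero entry of column `j` sits in row `π j`
    (π : Equiv.Perm (Fin m)) (hBπ : ∀ i j, B i j ≠ 0 ↔ i = π j)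
    (C : Matrix (Fin n) (Fin m) L)
    -- `γ` is the nondecreasing rearrangement of the multiset `{α_1,…,α_n, β_1,…,β_m}`
    (γ : Fin (n + m) → ℤ) (hγmono : Monotone γ)
    (e : Fin (n + m) ≃ (Fin n ⊕ Fin m))
    (hγ : ∀ i, γ i = Sum.elim (fun i' => v (A i' (ρ i'))) (fun j' => v (B (π j') j')) (e i)) :
    (∃ U V : Matrix (Fin (n + m)) (Fin (n + m)) O, IsUnit U.det ∧ IsUnit V.det ∧
        Matrix.reindex finSumFinEquiv finSumFinEquiv (Matrix.fromBlocks A C 0 B) =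
          U.map (fun x => (x : L)) * Matrix.diagonal (fun i => t ^ (γ i)) *
            V.map (fun x => (x : L)))
      ↔ ∀ i j, C i j = 0 ∨ min (v (A i (ρ i))) (v (B (π j) j)) ≤ v (C i j) := by
  constructor
  · exact aux_fwd v t hv_mul hv_add ht0 ht1 O hO n m A B ρ hAρ π hBπ C γ hγmono e hγ
  · exact aux_bwd v t hv_mul ht0 ht1 O hO n m A B ρ hAρ π hBπ C γ e hγ
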